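/- Let V be a set and let H be a collection of subsets of V that is closed under complementation, and suppose that for all a, b ∈ H the interval {m ∈ H : a ⊆ m ⊆ b} is finite. Let α, β, γ be pairwise distinct strongly separated ultrafilters on H. Then the median med(α, β, γ) := (α ∩ β) ∪ (β ∩ γ) ∪ (γ ∩ α) satisfies the descending chain condition: there is no sequence (m_i)_{i ∈ ℕ} of members of med(α, β, γ) with m_{i+1} ⊊ m_i for every i. -/

import Mathlib

variable {V : Type*}

/-- Two subsets `a`, `b` of `V` cross if the four sets `a ∩ b`, `a \ b`, `b \ a`,
`(a ∪ b)ᶜ` are all nonempty. -/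
def Crosses (a b : Set V) : Prop :=
  (a ∩ b).Nonempty ∧ (a \ b).Nonempty ∧ (b \ a).Nonempty ∧ ((a ∪ b)ᶜ).Nonempty

/-- `h` and `k` are strongly separated (relative to `H`) if no member of `H` crosses
both of them. -/
def StronglySeparated (H : Set (Set V)) (h k : Set V) : Prop :=
  ∀ m ∈ H, ¬(Crosses m h ∧ Crosses m k)

/-- An ultrafilter on the complement-closed collection `H`. -/
def IsUltrafilterOn (H : Set (Set V)) (α : Set (Set V)) : Prop :=
  α ⊆ H ∧ (∀ h ∈ H, Xor' (h ∈ α) (hᶜ ∈ α)) ∧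
    (∀ h ∈ α, ∀ k ∈ H, h ⊆ k → k ∈ α)

/-- A strongly separated descending sequence in `H`. -/
def IsSSDescSeq (H : Set (Set V)) (h : ℕ → Set V) : Prop :=
  (∀ i, h i ∈ H) ∧ (∀ i, (h i).Nonempty) ∧ (∀ i, h (i + 1) ⊆ h i) ∧
    (⋂ i, h i) = ∅ ∧ ∀ i, StronglySeparated H (h i) (h (i + 1))

/-- A strongly separated ultrafilter: one containing all terms of some strongly
separated descending sequence. -/
def IsSSUltrafilter (H : Set (Set V)) (α : Set (Set V)) : Prop :=
  IsUltrafilterOn H α ∧ ∃ h : ℕ → Set V, IsSSDescSeq H h ∧ ∀ i, h i ∈ α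

private lemma chain_mono {f : ℕ → Set V} (hf : ∀ i, f (i + 1) ⊆ f i) {k i : ℕ}
    (hki : k ≤ i) : f i ⊆ f k := by
  induction hki with
  | refl => exact subset_rfl
  | step _ ih => exact (hf _).trans ih

private lemma uf_inter_nonempty {H δ : Set (Set V)} (hcompl : ∀ h ∈ H, hᶜ ∈ H)
    (hu : IsUltrafilterOn H δ) {a b : Set V} (ha : a ∈ δ) (hb : b ∈ δ) :
    (a ∩ b).Nonempty := by
  by_contra hne
  rw [Set.not_nonempty_iff_eq_empty] at hne
  have hsub : a ⊆ bᶜ := fun x hx hxb => Set.notMem_empty x (hne ▸ ⟨hx, hxb⟩)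
  have hbH : b ∈ H := hu.1 hb
  have hbc : bᶜ ∈ δ := hu.2.2 a ha bᶜ (hcompl b hbH) hsub
  rcases hu.2.1 b hbH with ⟨_, hn⟩ | ⟨_, hn⟩
  · exact hn hbc
  · exact hn hb

private lemma uf_mem_nonempty {H δ : Set (Set V)} (hcompl : ∀ h ∈ H, hᶜ ∈ H)
    (hu : IsUltrafilterOn H δ) {a : Set V} (ha : a ∈ δ) : a.Nonempty := by
  have := uf_inter_nonempty hcompl hu ha ha
  rwa [Set.inter_self] at this

/-- The key claim: if `h` belongs to an ultrafilter containing a strongly separated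
descending sequence, then the terms of the sequence are eventually contained in `h`. -/
private lemma eventually_seq_subset {H δ : Set (Set V)} (hcompl : ∀ h ∈ H, hᶜ ∈ H)
    (hu : IsUltrafilterOn H δ) {f : ℕ → Set V} (hf : IsSSDescSeq H f)
    (hfδ : ∀ i, f i ∈ δ) {h : Set V} (hh : h ∈ δ) :
    ∃ N, ∀ j, N ≤ j → f j ⊆ h := by
  obtain ⟨hfH, hfne, hfdesc, hfint, hfss⟩ := hf
  by_contra hc
  have hall : ∀ j, ¬ f j ⊆ h := by
    intro j hsub
    exact hc ⟨j, fun k hk => (chain_mono hfdesc hk).trans hsub⟩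
  have hhne : h.Nonempty := uf_mem_nonempty hcompl hu hh
  have hj0 : ∃ j0, ¬ h ⊆ f j0 := by
    by_contra hc2
    push_neg at hc2
    obtain ⟨x, hx⟩ := hhne
    have hxi : x ∈ ⋂ i, f i := Set.mem_iInter.2 fun i => hc2 i hx
    rw [hfint] at hxi
    exact hxi
  obtain ⟨j0, hj0⟩ := hj0
  have hj0' : ∀ j, j0 ≤ j → ¬ h ⊆ f j :=
    fun j hj hsub => hj0 (hsub.trans (chain_mono hfdesc hj))
  obtain ⟨x, hxf0, hxh⟩ := Set.not_subset.1 (hall 0)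
  have hxj : ∃ j1, x ∉ f j1 := by
    by_contra hc3
    push_neg at hc3
    have hxi : x ∈ ⋂ i, f i := Set.mem_iInter.2 hc3
    rw [hfint] at hxi
    exact hxi
  obtain ⟨j1, hxj1⟩ := hxj
  have hj1' : ∀ j, j1 ≤ j → x ∉ f j := fun j hj hm => hxj1 (chain_mono hfdesc hj hm)
  have hcr : ∀ j, max j0 j1 ≤ j → Crosses h (f j) := by
    intro j hj
    refine ⟨uf_inter_nonempty hcompl hu hh (hfδ j), ?_, ?_, ?_⟩
    · obtain ⟨y, hy1, hy2⟩ := Set.not_subset.1 (hj0' j ((le_max_left _ _).trans hj))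
      exact ⟨y, hy1, hy2⟩
    · obtain ⟨y, hy1, hy2⟩ := Set.not_subset.1 (hall j)
      exact ⟨y, hy1, hy2⟩
    · exact ⟨x, fun hmem => hmem.elim hxh (hj1' j ((le_max_right _ _).trans hj))⟩
  exact hfss (max j0 j1) h (hu.1 hh)
    ⟨hcr _ le_rfl, hcr _ (Nat.le_succ _)⟩

private lemma no_lower_bound {H : Set (Set V)}
    (hint : ∀ a ∈ H, ∀ b ∈ H, Set.Finite {m | m ∈ H ∧ a ⊆ m ∧ m ⊆ b})
    {m : ℕ → Set V} (hmH : ∀ i, m i ∈ H) (hdesc : ∀ i, m (i + 1) ⊂ m i)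
    {a : Set V} (haH : a ∈ H) (hab : ∀ i, a ⊆ m i) : False := by
  have hmsub : ∀ i, m (i + 1) ⊆ m i := fun i => (hdesc i).subset
  have hfin := hint a haH (m 0) (hmH 0)
  have hlt : ∀ i j : ℕ, i < j → m j ⊂ m i := fun i j hij =>
    lt_of_le_of_lt (chain_mono hmsub hij) (hdesc i)
  have hinj : Function.Injective m := by
    intro i j hij
    by_contra hne
    rcases Nat.lt_or_ge i j with h | h
    · exact (hlt i j h).ne hij.symm
    · exact (hlt j i (lt_of_le_of_ne h (Ne.symm hne))).ne hij
  have hmem : ∀ i, m i ∈ {x | x ∈ H ∧ a ⊆ x ∧ x ⊆ m 0} :=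
    fun i => ⟨hmH i, hab i, chain_mono hmsub (Nat.zero_le i)⟩
  exact Set.infinite_of_injective_forall_mem hinj hmem hfin

private lemma eventually_not_lb {H : Set (Set V)}
    (hint : ∀ a ∈ H, ∀ b ∈ H, Set.Finite {m | m ∈ H ∧ a ⊆ m ∧ m ⊆ b})
    {m : ℕ → Set V} (hmH : ∀ i, m i ∈ H) (hdesc : ∀ i, m (i + 1) ⊂ m i)
    {a : Set V} (haH : a ∈ H) : ∃ i0, ∀ i, i0 ≤ i → ¬ a ⊆ m i := by
  by_cases hca : ∀ i, a ⊆ m i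
  · exact absurd (no_lower_bound hint hmH hdesc haH hca) id
  · push_neg at hca
    obtain ⟨i0, hi0⟩ := hca
    exact ⟨i0, fun i hi hsub =>
      hi0 (hsub.trans (chain_mono (fun k => (hdesc k).subset) hi))⟩

private lemma median_pair {H : Set (Set V)} (hcompl : ∀ h ∈ H, hᶜ ∈ H)
    (hint : ∀ a ∈ H, ∀ b ∈ H, Set.Finite {m | m ∈ H ∧ a ⊆ m ∧ m ⊆ b})
    {δ ε : Set (Set V)} (hδ : IsSSUltrafilter H δ) (hε : IsUltrafilterOn H ε)
    {h : Set V} (hhδ : h ∈ δ) (hhε : hᶜ ∈ ε) {m : ℕ → Set V}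
    (hmδ : ∀ i, m i ∈ δ) (hmε : ∀ i, m i ∈ ε) (hdesc : ∀ i, m (i + 1) ⊂ m i) :
    False := by
  obtain ⟨hδu, f, hf, hfδ⟩ := hδ
  have hmH : ∀ i, m i ∈ H := fun i => hδu.1 (hmδ i)
  have hH : h ∈ H := hδu.1 hhδ
  obtain ⟨i1, hi1⟩ := eventually_not_lb hint hmH hdesc (hcompl h hH)
  obtain ⟨N, hN⟩ := eventually_seq_subset hcompl hδu hf hfδ hhδ
  obtain ⟨i2, hi2⟩ := eventually_not_lb hint hmH hdesc (hf.1 N)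
  obtain ⟨i3, hi3⟩ := eventually_not_lb hint hmH hdesc (hf.1 (N + 1))
  set I := max i1 (max i2 i3) with hI
  -- m I \ h is nonempty
  have c2 : (m I \ h).Nonempty := by
    obtain ⟨y, hy1, hy2⟩ := uf_inter_nonempty hcompl hε (hmε I) hhε
    exact ⟨y, hy1, hy2⟩
  -- (m I ∪ h)ᶜ is nonempty
  have c4 : ((m I ∪ h)ᶜ).Nonempty := by
    obtain ⟨y, hy1, hy2⟩ := Set.not_subset.1 (hi1 I (le_max_left _ _))
    exact ⟨y, fun hmem => hmem.elim hy2 hy1⟩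
  have key : ∀ j, N ≤ j → ¬ f j ⊆ m I → Crosses (m I) (f j) := by
    intro j hj hnsub
    refine ⟨uf_inter_nonempty hcompl hδu (hmδ I) (hfδ j), ?_, ?_, ?_⟩
    · obtain ⟨y, hy1, hy2⟩ := c2
      exact ⟨y, hy1, fun hy => hy2 (hN j hj hy)⟩
    · obtain ⟨y, hy1, hy2⟩ := Set.not_subset.1 hnsub
      exact ⟨y, hy1, hy2⟩
    · obtain ⟨y, hy⟩ := c4
      exact ⟨y, fun hmem => hy (hmem.elim Or.inl (fun hfy => Or.inr (hN j hj hfy)))⟩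
  have crN := key N le_rfl (hi2 I ((le_max_left _ _).trans (le_max_right _ _)))
  have crN1 := key (N + 1) (Nat.le_succ N)
    (hi3 I ((le_max_right _ _).trans (le_max_right _ _)))
  exact hf.2.2.2.2 N (m I) (hmH I) ⟨crN, crN1⟩

/-- If intervals in `H` are finite, then the median of three pairwise distinct strongly
separated ultrafilters satisfies the descending chain condition. -/
theorem median_of_ssUltrafilters_dcc
    (H : Set (Set V)) (hcompl : ∀ h ∈ H, hᶜ ∈ H)
    (hint : ∀ a ∈ H, ∀ b ∈ H, Set.Finite {m | m ∈ H ∧ a ⊆ m ∧ m ⊆ b})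
    (α β γ : Set (Set V))
    (hα : IsSSUltrafilter H α) (hβ : IsSSUltrafilter H β)
    (hγ : IsSSUltrafilter H γ)
    (hαβ : α ≠ β) (hβγ : β ≠ γ) (hγα : γ ≠ α) :
    ¬ ∃ m : ℕ → Set V,
        (∀ i, m i ∈ (α ∩ β) ∪ (β ∩ γ) ∪ (γ ∩ α)) ∧ ∀ i, m (i + 1) ⊂ m i := by
  rintro ⟨m, hmed, hdesc⟩
  have hmsub : ∀ i, m (i + 1) ⊆ m i := fun i => (hdesc i).subset
  have hmH : ∀ i, m i ∈ H := by
    intro i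
    rcases hmed i with (⟨h1, _⟩ | ⟨h1, _⟩) | ⟨h1, _⟩
    · exact hα.1.1 h1
    · exact hβ.1.1 h1
    · exact hγ.1.1 h1
  have hprop : ∀ δ ε : Set (Set V), IsUltrafilterOn H δ → IsUltrafilterOn H ε →
      {i | m i ∈ δ ∧ m i ∈ ε}.Infinite → ∀ i, m i ∈ δ ∧ m i ∈ ε := by
    intro δ ε hδ hε hinf k
    obtain ⟨i, hiS, hik⟩ := hinf.exists_gt k
    have hsub : m i ⊆ m k := chain_mono hmsub hik.le
    exact ⟨hδ.2.2 _ hiS.1 _ (hmH k) hsub, hε.2.2 _ hiS.2 _ (hmH k) hsub⟩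
  have hpair : ∀ δ ε : Set (Set V), IsSSUltrafilter H δ → IsSSUltrafilter H ε →
      δ ≠ ε → (∀ i, m i ∈ δ ∧ m i ∈ ε) → False := by
    intro δ ε hδ hε hne hm
    have hx : ∃ x, (x ∈ δ ∧ x ∉ ε) ∨ (x ∈ ε ∧ x ∉ δ) := by
      by_contra hc
      push_neg at hc
      refine hne (Set.eq_of_subset_of_subset ?_ ?_) <;> intro x hxm <;> by_contra hx'
      · exact hx' ((hc x).1 hxm)
      · exact hx' ((hc x).2 hxm)
    obtain ⟨x, ⟨hx1, hx2⟩ | ⟨hx1, hx2⟩⟩ := hx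
    · have hxc : xᶜ ∈ ε := by
        rcases hε.1.2.1 x (hδ.1.1 hx1) with ⟨h1, _⟩ | ⟨h1, _⟩
        · exact absurd h1 hx2
        · exact h1
      exact median_pair hcompl hint hδ hε.1 hx1 hxc
        (fun i => (hm i).1) (fun i => (hm i).2) hdesc
    · have hxc : xᶜ ∈ δ := by
        rcases hδ.1.2.1 x (hε.1.1 hx1) with ⟨h1, _⟩ | ⟨h1, _⟩
        · exact absurd h1 hx2
        · exact h1
      exact median_pair hcompl hint hε hδ.1 hx1 hxc
        (fun i => (hm i).2) (fun i => (hm i).1) hdesc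
  have hcases : {i | m i ∈ α ∧ m i ∈ β}.Infinite ∨ {i | m i ∈ β ∧ m i ∈ γ}.Infinite ∨
      {i | m i ∈ γ ∧ m i ∈ α}.Infinite := by
    by_contra hc
    push_neg at hc
    obtain ⟨h1, h2, h3⟩ := hc
    have hfin : (Set.univ : Set ℕ).Finite := by
      refine Set.Finite.subset ((h1.union h2).union h3) ?_
      intro i _
      rcases hmed i with (⟨ha, hb⟩ | ⟨hb, hg⟩) | ⟨hg, ha⟩
      · exact Or.inl (Or.inl ⟨ha, hb⟩)
      · exact Or.inl (Or.inr ⟨hb, hg⟩)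
      · exact Or.inr ⟨hg, ha⟩
    exact Set.infinite_univ hfin
  rcases hcases with hc | hc | hc
  · exact hpair α β hα hβ hαβ (hprop α β hα.1 hβ.1 hc)
  · exact hpair β γ hβ hγ hβγ (hprop β γ hβ.1 hγ.1 hc)
  · exact hpair γ α hγ hα hγα (hprop γ α hγ.1 hα.1 hc)
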